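/- arXiv:2206.14023 — 2 statements merged into one kernel-verified Lean document; each statement's English description precedes it below -/
import Mathlib

section
/- Let k ≥ 2 and let λ, μ be partitions with μ ⊂ λ, λ_1 < k, and λ/μ a rim hook of size k whose diagram has b columns. With β_i = λᶜ_i - i for 1 ≤ i ≤ k-1 (padding λᶜ with zeros), there exists i ∈ {1,...,k-b} such that β(μᶜ) = (β_1,...,β_{i-1}, β_{i+1},...,β_{i+b-1}, β_i - k, β_{i+b},...,β_{k-1}). -/
open scoped Classical

namespace Petrie

/-- An integer partition, encoded as a weakly decreasing, eventually zero
function `ℕ → ℕ` (0-indexed parts: `parts i` is the `(i+1)`-st part). -/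
structure Partition where
  parts : ℕ → ℕ
  antitone : ∀ ⦃i j : ℕ⦄, i ≤ j → parts j ≤ parts i
  fin_supp : ∃ N, ∀ i, N ≤ i → parts i = 0

/-- The size `|λ|` of a partition. -/
noncomputable def psize (l : Partition) : ℕ := ∑ᶠ i, l.parts i

/-- The number of (nonzero) parts of a partition. -/
noncomputable def length (l : Partition) : ℕ := sInf {i | l.parts i = 0}

/-- The partition whose parts are given by a weakly decreasing list `L`
(of its nonzero entries, possibly padded by zeros). -/
noncomputable def ofList (L : List ℕ) : Partition where
  parts := fun i => (L.drop i).foldr max 0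
  antitone := by
    have step : ∀ (M : List ℕ) (i : ℕ),
        (M.drop (i+1)).foldr max 0 ≤ (M.drop i).foldr max 0 := by
      intro M
      induction M with
      | nil => intro i; simp
      | cons a t ih =>
        intro i
        cases i with
        | zero =>
          simp only [List.drop_succ_cons, List.drop_zero, List.foldr_cons]; exact le_max_right a (t.foldr max 0)
        | succ n => simpa using ih n
    intro i j hij
    induction j, hij using Nat.le_induction with
    | base => exact le_rfl
    | succ n hn ih => exact (step L n).trans ih
  fin_supp := ⟨L.length, by intro i hi; simp [List.drop_eq_nil_of_le hi]⟩

/-- The conjugate (transpose) partition. -/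
noncomputable def conj (l : Partition) : Partition where
  parts := fun i => sInf {n | l.parts n ≤ i}
  antitone := by
    intro i j hij
    obtain ⟨N, hN⟩ := l.fin_supp
    refine csInf_le_csInf (OrderBot.bddBelow _) ⟨N, ?_⟩ ?_
    · simp [hN N le_rfl]
    · intro n hn
      exact le_trans hn hij
  fin_supp := by
    refine ⟨l.parts 0, fun i hi => ?_⟩
    exact Nat.sInf_eq_zero.mpr (Or.inl (le_trans (l.antitone (Nat.zero_le 0)) hi))

/-- The `k`-Petrie number `pet_k(λ) = det[χ(0 ≤ λ_i - i + j < k)]_{i,j=1}^{ℓ(λ)}`. -/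
noncomputable def pet (k : ℕ) (l : Partition) : ℤ :=
  Matrix.det (Matrix.of fun i j : Fin (length l) =>
    if (0:ℤ) ≤ (l.parts i : ℤ) - (i:ℕ) + (j:ℕ) ∧ (l.parts i : ℤ) - (i:ℕ) + (j:ℕ) < k
    then 1 else 0)

/-- The cells of the skew diagram `λ/μ` (rows and columns 0-indexed). -/
def cells (la mu : Partition) : Set (ℕ × ℕ) :=
  {c | mu.parts c.1 ≤ c.2 ∧ c.2 < la.parts c.1}

/-- Rookwise adjacency of two cells. -/
def Adj (c d : ℕ × ℕ) : Prop :=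
  (c.1 = d.1 ∧ (c.2 + 1 = d.2 ∨ d.2 + 1 = c.2)) ∨
  (c.2 = d.2 ∧ (c.1 + 1 = d.1 ∨ d.1 + 1 = c.1))

/-- `λ/μ` is a rim hook (border strip) of size `k`: `μ ⊆ λ`, the skew diagram
has `k` cells, is rookwise connected, and contains no 2×2 square. -/
def IsRimHook (la mu : Partition) (k : ℕ) : Prop :=
  (∀ i, mu.parts i ≤ la.parts i) ∧
  (∑ᶠ i, (la.parts i - mu.parts i)) = k ∧
  (∀ c ∈ cells la mu, ∀ d ∈ cells la mu,
    Relation.ReflTransGen (fun a b => a ∈ cells la mu ∧ b ∈ cells la mu ∧ Adj a b) c d) ∧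
  ¬ ∃ i j : ℕ, (i, j) ∈ cells la mu ∧ (i+1, j) ∈ cells la mu ∧
      (i, j+1) ∈ cells la mu ∧ (i+1, j+1) ∈ cells la mu

/-- The height of a skew shape `λ/μ`: one less than its number of rows. -/
noncomputable def height (la mu : Partition) : ℕ :=
  Set.ncard {i | mu.parts i < la.parts i} - 1

/-- The number of columns of the skew diagram `λ/μ`. -/
noncomputable def cols (la mu : Partition) : ℕ :=
  Set.ncard {j | ∃ i, (i, j) ∈ cells la mu}

/-- `c` is the `k`-core of `λ`: it is obtained from `λ` by successively removing
rim hooks of size `k`, and no further rim hook of size `k` can be removed. -/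
def IsCore (k : ℕ) (la c : Partition) : Prop :=
  Relation.ReflTransGen (fun a b => IsRimHook a b k) la c ∧ ∀ b, ¬ IsRimHook c b k

/-- Dominance order: `Dominates μ λ` means `λ ⊴ μ`. -/
def Dominates (mu la : Partition) : Prop :=
  ∀ r, ∑ i ∈ Finset.range r, la.parts i ≤ ∑ i ∈ Finset.range r, mu.parts i

/-! ### Symmetric functions, realized as formal power series in countably
many variables `x_0, x_1, x_2, …`. -/

/-- The ring of formal power series in the variables `x_i`, `i : ℕ`. -/
abbrev SymFn := MvPowerSeries ℕ ℤ

/-- The total degree of an exponent vector. -/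
noncomputable def degree (d : ℕ →₀ ℕ) : ℕ := d.sum fun _ e => e

/-- The complete homogeneous symmetric function `h_m`. -/
noncomputable def hfun (m : ℕ) : SymFn := fun d => if degree d = m then 1 else 0

/-- `h_n` for an integer index (`0` for negative `n`). -/
noncomputable def hz (n : ℤ) : SymFn := if 0 ≤ n then hfun n.toNat else 0

/-- The elementary symmetric function `e_m`. -/
noncomputable def esymmF (m : ℕ) : SymFn :=
  fun d => if degree d = m ∧ ∀ i, d i ≤ 1 then 1 else 0

/-- The power sum symmetric function `p_n = Σ_i x_i^n`. -/
noncomputable def psumF (n : ℕ) : SymFn :=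
  fun d => if ∃ i, d = Finsupp.single i n then 1 else 0

/-- The Petrie symmetric function `G(k,m)`, i.e. the degree-`m` part of
`Π_i (1 + x_i + x_i^2 + ⋯ + x_i^{k-1})`. -/
noncomputable def G (k m : ℕ) : SymFn :=
  fun d => if degree d = m ∧ ∀ i, d i < k then 1 else 0

/-- The monomial symmetric function `m_λ`. -/
noncomputable def msym (l : Partition) : SymFn :=
  fun d => if Multiset.map (fun i => d i) d.support.val =
      Multiset.map l.parts (Multiset.range (length l)) then 1 else 0

/-- The Schur function `s_λ`, via the Jacobi–Trudi determinant
`s_λ = det[h_{λ_i - i + j}]_{i,j=1}^{ℓ(λ)}`. -/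
noncomputable def schur (l : Partition) : SymFn :=
  Matrix.det (Matrix.of fun i j : Fin (length l) =>
    hz ((l.parts i : ℤ) - (i:ℕ) + (j:ℕ)))

/-- The representative in `{1, …, k}` of `x` modulo `k`. -/
noncomputable def resid (k : ℕ) (x : ℤ) : ℤ := if x % (k:ℤ) = 0 then (k:ℤ) else x % (k:ℤ)

/-- `β_i = λᶜ_i - i` (1-indexed `i`). -/
noncomputable def betaSeq (l : Partition) (i : ℕ) : ℤ := ((conj l).parts (i-1) : ℤ) - (i:ℤ)

/-- `γ_i ∈ {1, …, k}`, `γ_i ≡ λᶜ_i - i (mod k)` (1-indexed `i`). -/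
noncomputable def gammaSeq (k : ℕ) (l : Partition) (i : ℕ) : ℤ := resid k (betaSeq l i)

/-- The number of non-inversions of the sequence `γ_1, …, γ_{k-1}`. -/
noncomputable def ninv (k : ℕ) (g : ℕ → ℤ) : ℕ :=
  (((Finset.Icc 1 (k-1)) ×ˢ (Finset.Icc 1 (k-1))).filter
    (fun p => p.1 < p.2 ∧ g p.1 < g p.2)).card

lemma conj_parts_le_iff (l : Partition) (j n : ℕ) :
    (conj l).parts j ≤ n ↔ l.parts n ≤ j := by
  obtain ⟨N, hN⟩ := l.fin_supp
  have hne : {m | l.parts m ≤ j}.Nonempty := ⟨N, by simp [hN N le_rfl]⟩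
  constructor
  · intro h
    have hmem : l.parts (sInf {m | l.parts m ≤ j}) ≤ j := Nat.sInf_mem hne
    exact le_trans (l.antitone h) hmem
  · intro h
    exact Nat.sInf_le h

lemma lt_conj_parts_iff (l : Partition) (j n : ℕ) :
    n < (conj l).parts j ↔ j < l.parts n := by
  rw [← not_le, ← not_le, conj_parts_le_iff]

lemma conj_parts_eq (l : Partition) {j m : ℕ} (h1 : l.parts m ≤ j)
    (h2 : ∀ n, n < m → j < l.parts n) : (conj l).parts j = m := by
  refine le_antisymm ((conj_parts_le_iff l j m).2 h1) ?_
  by_contra h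
  push_neg at h
  have h3 : l.parts ((conj l).parts j) ≤ j := (conj_parts_le_iff l j _).1 le_rfl
  exact absurd h3 (not_le.2 (h2 _ h))

lemma reach_pred (la mu : Partition) (P : ℕ × ℕ → Prop)
    (hP : ∀ a b, a ∈ cells la mu → b ∈ cells la mu → Adj a b → P a → P b)
    {c d : ℕ × ℕ}
    (h : Relation.ReflTransGen
      (fun a b => a ∈ cells la mu ∧ b ∈ cells la mu ∧ Adj a b) c d)
    (hc : P c) : P d := by
  induction h with
  | refl => exact hc
  | tail _ hstep ih => exact hP _ _ hstep.1 hstep.2.1 hstep.2.2 ih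

lemma rimhook_structure (la mu : Partition) (k : ℕ) (hk : 1 ≤ k)
    (hrh : IsRimHook la mu k) :
    ∃ r₁ r₂ : ℕ, r₁ ≤ r₂ ∧
      (∀ r, mu.parts r < la.parts r ↔ (r₁ ≤ r ∧ r ≤ r₂)) ∧
      (∀ r, r₁ ≤ r → r < r₂ → la.parts (r+1) = mu.parts r + 1) ∧
      ((k : ℤ) = (la.parts r₁ : ℤ) - (mu.parts r₂ : ℤ) + (r₂ : ℤ) - (r₁ : ℤ)) ∧
      cols la mu = la.parts r₁ - mu.parts r₂ := by
  obtain ⟨hsub, hsum, hconn, hno22⟩ := hrh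
  obtain ⟨N, hN⟩ := la.fin_supp
  have hsupp : (Function.support fun r => la.parts r - mu.parts r)
      ⊆ ↑(Finset.range N) := by
    intro r hr
    simp only [Function.mem_support] at hr
    simp only [Finset.coe_range, Set.mem_Iio]
    by_contra h
    push_neg at h
    have h0 : la.parts r = 0 := hN r h
    omega
  have hsum' : ∑ r ∈ Finset.range N, (la.parts r - mu.parts r) = k := by
    rw [← finsum_eq_sum_of_support_subset _ hsupp]; exact hsum
  set T := (Finset.range N).filter (fun r => mu.parts r < la.parts r) with hT
  have hTmem : ∀ r, r ∈ T ↔ mu.parts r < la.parts r := by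
    intro r
    simp only [hT, Finset.mem_filter, Finset.mem_range]
    constructor
    · exact fun h => h.2
    · intro h
      refine ⟨?_, h⟩
      by_contra hc
      push_neg at hc
      have h0 := hN r hc
      omega
  have hTsum : ∑ r ∈ T, (la.parts r - mu.parts r) = k := by
    rw [← hsum']
    apply Finset.sum_subset (Finset.filter_subset _ _)
    intro x _ hx
    rw [hTmem] at hx
    omega
  have hTne : T.Nonempty := by
    by_contra h
    rw [Finset.not_nonempty_iff_eq_empty] at h
    rw [h, Finset.sum_empty] at hTsum
    omega
  set r₁ := T.min' hTne with hr₁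
  set r₂ := T.max' hTne with hr₂
  have hr1S : mu.parts r₁ < la.parts r₁ := (hTmem _).1 (T.min'_mem hTne)
  have hr2S : mu.parts r₂ < la.parts r₂ := (hTmem _).1 (T.max'_mem hTne)
  have hr12 : r₁ ≤ r₂ := T.min'_le _ (T.max'_mem hTne)
  have hbound : ∀ r, mu.parts r < la.parts r → r₁ ≤ r ∧ r ≤ r₂ := fun r h =>
    ⟨T.min'_le r ((hTmem r).2 h), T.le_max' r ((hTmem r).2 h)⟩
  have hint : ∀ r, r₁ ≤ r → r ≤ r₂ → mu.parts r < la.parts r := by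
    intro r ha hb
    by_contra hcon
    push_neg at hcon
    have hr1 : r₁ < r := lt_of_le_of_ne ha (by rintro rfl; omega)
    have hr2 : r < r₂ := lt_of_le_of_ne hb (by rintro rfl; omega)
    have hc2 : ((r₂ : ℕ), mu.parts r₂) ∈ cells la mu := ⟨le_rfl, hr2S⟩
    have hc1 : ((r₁ : ℕ), mu.parts r₁) ∈ cells la mu := ⟨le_rfl, hr1S⟩
    have hpath := hconn _ hc2 _ hc1
    have hfin : r < r₁ := by
      refine reach_pred la mu (fun c => r < c.1) ?_ hpath hr2
      intro a b _ hb' hadj hPa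
      rcases hadj with ⟨h1, _⟩ | ⟨_, h2 | h2⟩
      · omega
      · omega
      · by_contra hle
        push_neg at hle
        have hb1 : b.1 = r := by omega
        obtain ⟨hb2, hb3⟩ := hb'
        rw [hb1] at hb2 hb3
        omega
    omega
  have hchain : ∀ r, r₁ ≤ r → r < r₂ → la.parts (r+1) = mu.parts r + 1 := by
    intro r ha hb
    have h1 := hint r ha (le_of_lt hb)
    have h2 := hint (r+1) (by omega) hb
    have hmono1 : la.parts (r+1) ≤ la.parts r := la.antitone (Nat.le_succ r)
    have hmono2 : mu.parts (r+1) ≤ mu.parts r := mu.antitone (Nat.le_succ r)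
    have hup : la.parts (r+1) ≤ mu.parts r + 1 := by
      by_contra hcon
      push_neg at hcon
      exact hno22 ⟨r, mu.parts r, ⟨le_rfl, h1⟩,
        ⟨(show mu.parts (r+1) ≤ mu.parts r by omega),
         (show mu.parts r < la.parts (r+1) by omega)⟩,
        ⟨(show mu.parts r ≤ mu.parts r + 1 by omega),
         (show mu.parts r + 1 < la.parts r by omega)⟩,
        ⟨(show mu.parts (r+1) ≤ mu.parts r + 1 by omega),
         (show mu.parts r + 1 < la.parts (r+1) by omega)⟩⟩
    have hlo : mu.parts r + 1 ≤ la.parts (r+1) := by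
      by_contra hcon
      push_neg at hcon
      have hc1 : ((r : ℕ), mu.parts r) ∈ cells la mu := ⟨le_rfl, h1⟩
      have hc2 : ((r+1 : ℕ), mu.parts (r+1)) ∈ cells la mu := ⟨le_rfl, h2⟩
      have hpath := hconn _ hc1 _ hc2
      have hfinal : r + 1 ≤ r := by
        refine reach_pred la mu (fun c => c.1 ≤ r) ?_ hpath le_rfl
        intro a b ha' hb' hadj hPa
        rcases hadj with ⟨h3, _⟩ | ⟨h3, h4 | h4⟩
        · omega
        · rcases Nat.lt_or_ge a.1 r with h | h
          · omega
          · have ha1 : a.1 = r := by omega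
            exfalso
            obtain ⟨ha2, _⟩ := ha'
            obtain ⟨_, hb3⟩ := hb'
            rw [ha1] at ha2
            have hb1 : b.1 = r + 1 := by omega
            rw [hb1] at hb3
            omega
        · omega
      omega
    omega
  have hTIcc : T = Finset.Icc r₁ r₂ := by
    ext r
    rw [hTmem, Finset.mem_Icc]
    exact ⟨fun h => hbound r h, fun h => hint r h.1 h.2⟩
  have hkZ : (k : ℤ) = ∑ r ∈ Finset.Icc r₁ r₂,
      ((la.parts r : ℤ) - (mu.parts r : ℤ)) := by
    rw [← hTsum, hTIcc, Nat.cast_sum]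
    apply Finset.sum_congr rfl
    intro r _
    have := hsub r
    omega
  have hsumIcc : ∀ m, r₁ ≤ m → m ≤ r₂ →
      (∑ r ∈ Finset.Icc r₁ m, ((la.parts r : ℤ) - (mu.parts r : ℤ)))
        = (la.parts r₁ : ℤ) - (mu.parts m : ℤ) + (m : ℤ) - (r₁ : ℤ) := by
    intro m hm
    induction m, hm using Nat.le_induction with
    | base =>
      intro _
      rw [Finset.Icc_self, Finset.sum_singleton]
      ring
    | succ n hn ih =>
      intro hn2
      rw [Finset.sum_Icc_succ_top (by omega), ih (by omega),
        hchain n hn (by omega)]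
      push_cast
      ring
  have hC : (k : ℤ) = (la.parts r₁ : ℤ) - (mu.parts r₂ : ℤ)
      + (r₂ : ℤ) - (r₁ : ℤ) := by
    rw [hkZ, hsumIcc r₂ hr12 le_rfl]
  have hcols : cols la mu = la.parts r₁ - mu.parts r₂ := by
    have hset : {j | ∃ i, (i, j) ∈ cells la mu}
        = ↑(Finset.Ico (mu.parts r₂) (la.parts r₁)) := by
      ext j
      simp only [Set.mem_setOf_eq, Finset.coe_Ico, Set.mem_Ico]
      constructor
      · rintro ⟨r, hc⟩
        obtain ⟨hr1, hr2⟩ : mu.parts r ≤ j ∧ j < la.parts r := hc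
        have hS : mu.parts r < la.parts r := lt_of_le_of_lt hr1 hr2
        obtain ⟨ha, hb⟩ := hbound r hS
        exact ⟨le_trans (mu.antitone hb) hr1, lt_of_lt_of_le hr2 (la.antitone ha)⟩
      · rintro ⟨hj1, hj2⟩
        have hUne : ((Finset.Icc r₁ r₂).filter (fun s => j < la.parts s)).Nonempty :=
          ⟨r₁, by
            simp only [Finset.mem_filter, Finset.mem_Icc]
            exact ⟨⟨le_rfl, hr12⟩, hj2⟩⟩
        obtain ⟨r, hrmem, hrmax⟩ :
            ∃ r, r ∈ (Finset.Icc r₁ r₂).filter (fun s => j < la.parts s) ∧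
              ∀ y ∈ (Finset.Icc r₁ r₂).filter (fun s => j < la.parts s), y ≤ r :=
          ⟨_, Finset.max'_mem _ hUne, fun y hy => Finset.le_max' _ y hy⟩
        simp only [Finset.mem_filter, Finset.mem_Icc] at hrmem
        refine ⟨r, show mu.parts r ≤ j ∧ j < la.parts r from ⟨?_, hrmem.2⟩⟩
        rcases eq_or_lt_of_le hrmem.1.2 with h | h
        · rw [h]; exact hj1
        · have h6 : la.parts (r+1) ≤ j := by
            by_contra h7
            push_neg at h7
            have h5 : r + 1 ≤ r := hrmax (r+1) (by
              simp only [Finset.mem_filter, Finset.mem_Icc]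
              exact ⟨⟨by omega, by omega⟩, h7⟩)
            omega
          have h8 := hchain r hrmem.1.1 h
          omega
    rw [cols, hset, Set.ncard_coe_finset, Nat.card_Ico]
  exact ⟨r₁, r₂, hr12, fun r => ⟨hbound r, fun h => hint r h.1 h.2⟩,
    hchain, hC, hcols⟩

/-- removing a rim hook `λ/μ` of size `k` with `b` columns from
`λ` (with `λ_1 < k`) acts on the `β`-sequence as indicated: for some
`i ∈ {1,…,k-b}`, `β(μᶜ) = (β_1,…,β_{i-1},β_{i+1},…,β_{i+b-1},β_i-k,β_{i+b},…,β_{k-1})`. -/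
theorem beta_after_rim_hook_removal (k : ℕ) (hk : 2 ≤ k) (la mu : Partition)
    (h1 : la.parts 0 < k) (hrh : IsRimHook la mu k) :
    ∃ i : ℕ, 1 ≤ i ∧ i ≤ k - cols la mu ∧
      (∀ t, 1 ≤ t → t < i → betaSeq mu t = betaSeq la t) ∧
      (∀ t, i ≤ t → t + 2 ≤ i + cols la mu → betaSeq mu t = betaSeq la (t+1)) ∧
      betaSeq mu (i + cols la mu - 1) = betaSeq la i - (k : ℤ) ∧
      (∀ t, i + cols la mu ≤ t → t ≤ k - 1 → betaSeq mu t = betaSeq la t) := by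
  obtain ⟨r₁, r₂, hr12, hiff, hchain, hC, hcols⟩ :=
    rimhook_structure la mu k (by omega) hrh
  have hsub := hrh.1
  have heq : ∀ r, r < r₁ ∨ r₂ < r → mu.parts r = la.parts r := by
    intro r hr
    have h2 : ¬ mu.parts r < la.parts r := by rw [hiff]; omega
    have h3 := hsub r
    omega
  have hr1S : mu.parts r₁ < la.parts r₁ := (hiff r₁).2 ⟨le_rfl, hr12⟩
  have hr2S : mu.parts r₂ < la.parts r₂ := (hiff r₂).2 ⟨hr12, le_rfl⟩
  have hlam : mu.parts r₂ < la.parts r₁ :=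
    lt_of_lt_of_le hr2S (la.antitone hr12)
  have hla0 : la.parts r₁ ≤ la.parts 0 := la.antitone (Nat.zero_le _)
  refine ⟨mu.parts r₂ + 1, by omega, ?_, ?_, ?_, ?_, ?_⟩
  · rw [hcols]
    omega
  · intro t ht1 ht2
    have hj : t - 1 < mu.parts r₂ := by omega
    have hcm : (conj mu).parts (t-1) = (conj la).parts (t-1) := by
      apply le_antisymm
      · rw [conj_parts_le_iff]
        exact le_trans (hsub _) ((conj_parts_le_iff la _ _).1 le_rfl)
      · rw [conj_parts_le_iff]
        have h1 : mu.parts ((conj mu).parts (t-1)) ≤ t - 1 :=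
          (conj_parts_le_iff mu _ _).1 le_rfl
        have h2 : r₂ < (conj mu).parts (t-1) := by
          by_contra h
          push_neg at h
          have h3 := mu.antitone h
          omega
        rw [← heq _ (Or.inr h2)]
        exact h1
    simp only [betaSeq, hcm]
  · intro t ht1 ht2
    rw [hcols] at ht2
    have hj1 : mu.parts r₂ ≤ t - 1 := by omega
    have hj2 : (t - 1) + 2 ≤ la.parts r₁ := by omega
    have hmn : mu.parts ((conj mu).parts (t-1)) ≤ t - 1 :=
      (conj_parts_le_iff mu _ _).1 le_rfl
    have hmin : ∀ p, p < (conj mu).parts (t-1) → t - 1 < mu.parts p := by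
      intro p hp
      exact (lt_conj_parts_iff mu (t-1) p).1 hp
    have hkey : (conj la).parts ((t-1)+1) = (conj mu).parts (t-1) + 1 := by
      apply conj_parts_eq
      · rcases lt_or_ge ((conj mu).parts (t-1)) r₁ with h | h
        · exfalso
          have h3 := heq _ (Or.inl h)
          have h4 := la.antitone (le_of_lt h)
          omega
        · rcases lt_or_ge ((conj mu).parts (t-1)) r₂ with h2 | h2
          · rw [hchain _ h h2]
            omega
          · have h3 := heq ((conj mu).parts (t-1) + 1) (Or.inr (by omega))
            have h4 := mu.antitone (Nat.le_add_right ((conj mu).parts (t-1)) 1)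
            omega
      · intro p hp
        rcases le_or_gt p r₁ with h | h
        · have h3 := la.antitone h
          omega
        · have hp1 : r₁ ≤ p - 1 := by omega
          have hp2 : p - 1 < r₂ := by
            by_contra hcc
            push_neg at hcc
            have h3 := mu.antitone hcc
            have h4 := hmin (p-1) (by omega)
            omega
          have hch := hchain (p-1) hp1 hp2
          have hmn2 := hmin (p-1) (by omega)
          have he : p - 1 + 1 = p := by omega
          rw [he] at hch
          omega
    have he2 : t + 1 - 1 = (t-1) + 1 := by omega
    simp only [betaSeq, he2, hkey]
    push_cast
    ring
  · have e1 : mu.parts r₂ + 1 + cols la mu - 1 = la.parts r₁ := by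
      rw [hcols]; omega
    rw [e1]
    have hcm : (conj mu).parts (la.parts r₁ - 1) = r₁ := by
      apply conj_parts_eq
      · omega
      · intro p hp
        have h2 := heq p (Or.inl hp)
        have h3 := la.antitone (le_of_lt hp)
        omega
    have hcl : (conj la).parts (mu.parts r₂) = r₂ + 1 := by
      apply conj_parts_eq
      · have h2 := heq (r₂+1) (Or.inr (by omega))
        have h3 := mu.antitone (Nat.le_add_right r₂ 1)
        omega
      · intro p hp
        have h2 := la.antitone (show p ≤ r₂ by omega)
        omega
    have e3 : mu.parts r₂ + 1 - 1 = mu.parts r₂ := by omega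
    simp only [betaSeq, e3, hcm, hcl]
    push_cast
    omega
  · intro t ht1 _
    rw [hcols] at ht1
    have hj : la.parts r₁ ≤ t - 1 := by omega
    have hcm : (conj mu).parts (t-1) = (conj la).parts (t-1) := by
      apply le_antisymm
      · rw [conj_parts_le_iff]
        exact le_trans (hsub _) ((conj_parts_le_iff la _ _).1 le_rfl)
      · rw [conj_parts_le_iff]
        have h1 : mu.parts ((conj mu).parts (t-1)) ≤ t - 1 :=
          (conj_parts_le_iff mu _ _).1 le_rfl
        rcases lt_or_ge ((conj mu).parts (t-1)) r₁ with h | h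
        · rw [← heq _ (Or.inl h)]
          exact h1
        · exact le_trans (la.antitone h) hj
    simp only [betaSeq, hcm]

end Petrie
end

section
/- If a partition λ of m satisfies pet_k(λ) ≠ 0 (k ≥ 1), then λ_1 < k and the k-core of λ equals (d), where d is the remainder of m modulo k (interpreted as the empty partition when d = 0). -/
open scoped Classical

namespace Petrie

/-! ### Auxiliary development -/

theorem Partition.ext' {a b : Partition} (h : a.parts = b.parts) : a = b := by
  cases a; cases b; simp_all

theorem parts_eq_zero (l : Partition) {i : ℕ} (h : length l ≤ i) : l.parts i = 0 := by
  have hne : {i | l.parts i = 0}.Nonempty := by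
    obtain ⟨N, hN⟩ := l.fin_supp
    exact ⟨N, hN N le_rfl⟩
  exact Nat.eq_zero_of_le_zero (le_trans (l.antitone h) (le_of_eq (Nat.sInf_mem hne)))

theorem parts_pos (l : Partition) {i : ℕ} (h : i < length l) : 0 < l.parts i :=
  Nat.pos_of_ne_zero (fun h0 => Nat.notMem_of_lt_sInf (s := {i | l.parts i = 0}) h h0)

/-- beads: `b t = parts t - t - 1`. -/
noncomputable def bead (l : Partition) (t : ℕ) : ℤ := (l.parts t : ℤ) - t - 1

/-- membership in the bead set -/
def InB (l : Partition) (c : ℤ) : Prop := ∃ t, bead l t = c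

theorem bead_strictAnti (l : Partition) : StrictAnti (bead l) := by
  apply strictAnti_nat_of_succ_lt
  intro n
  have := l.antitone (Nat.le_succ n)
  unfold bead
  have h2 : l.parts (n+1) ≤ l.parts n := this
  push_cast
  omega

theorem bead_le (l : Partition) (t : ℕ) : bead l t ≤ (l.parts 0 : ℤ) - 1 := by
  have := l.antitone (Nat.zero_le t)
  unfold bead; push_cast; omega

theorem bead_ge (l : Partition) (t : ℕ) : -(t : ℤ) - 1 ≤ bead l t := by
  unfold bead; push_cast; omega

theorem bead_of_zero (l : Partition) {t : ℕ} (h : l.parts t = 0) : bead l t = -(t:ℤ) - 1 := by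
  unfold bead; rw [h]; push_cast; ring

/-- every value `≤ -(length l) - 1` is a bead -/
theorem InB_of_le (l : Partition) {c : ℤ} (h : c ≤ -(length l : ℤ) - 1) : InB l c := by
  refine ⟨(-c - 1).toNat, ?_⟩
  have h1 : (length l : ℤ) ≤ -c - 1 := by omega
  have h0 : (0:ℤ) ≤ (length l : ℤ) := Int.ofNat_nonneg _
  have h2 : ((-c - 1).toNat : ℤ) = -c - 1 := Int.toNat_of_nonneg (by omega)
  have h3 : length l ≤ (-c - 1).toNat := by omega
  rw [bead_of_zero l (parts_eq_zero l h3), h2]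
  ring

theorem not_InB_ge (l : Partition) {c : ℤ} (h : ¬ InB l c) : -(length l : ℤ) ≤ c := by
  by_contra hc
  exact h (InB_of_le l (by omega))

/-- the characterization: all parts `< k` and the low gaps pairwise non-congruent mod `k` -/
def CharP (k : ℕ) (l : Partition) : Prop :=
  l.parts 0 < k ∧ ∀ g g' : ℤ, ¬ InB l g → ¬ InB l g' → g ≤ (k:ℤ) - 2 → g' ≤ (k:ℤ) - 2 →
    (k:ℤ) ∣ (g - g') → g = g'

theorem psize_eq_parts_zero (l : Partition) (h : ∀ t, 1 ≤ t → l.parts t = 0) :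
    psize l = l.parts 0 := by
  unfold psize
  exact finsum_eq_single _ 0 (fun t ht => h t (Nat.one_le_iff_ne_zero.mpr ht))

/-- telescoping sums over `Ico` -/
theorem sum_Ico_telescope {y : ℕ → ℤ} {u w : ℕ} (h : u ≤ w) :
    ∑ j ∈ Finset.Ico u w, (y j - y (j+1)) = y u - y w := by
  rw [Finset.sum_Ico_eq_sum_range]
  have := Finset.sum_range_sub' (fun t => y (u + t)) (w - u)
  simp only [Nat.add_zero] at this
  calc ∑ k ∈ Finset.range (w - u), (y (u + k) - y (u + k + 1))
      = ∑ k ∈ Finset.range (w - u), (y (u + k) - y (u + (k + 1))) := by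
        apply Finset.sum_congr rfl; intro x _; rw [Nat.add_assoc]
    _ = y u - y (u + (w - u)) := this
    _ = y u - y w := by congr 2; omega

theorem parts_lt_of_pet_ne_zero {k : ℕ} {l : Partition} (hk1 : 1 ≤ k) (h : pet k l ≠ 0) :
    l.parts 0 < k := by
  by_contra hk
  push_neg at hk
  have hpos : 0 < l.parts 0 := lt_of_lt_of_le hk1 hk
  have hL : 0 < length l := by
    by_contra hL0
    push_neg at hL0
    have := parts_eq_zero l (i := 0) (by omega)
    omega
  apply h
  apply Matrix.det_eq_zero_of_row_eq_zero (⟨0, hL⟩ : Fin (length l))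
  intro j
  simp only [Matrix.of_apply]
  rw [if_neg]
  rintro ⟨-, h2⟩
  have hjk : (k:ℤ) ≤ (l.parts 0 : ℤ) := by exact_mod_cast hk
  have : (0:ℤ) ≤ (j:ℕ) := Int.ofNat_nonneg _
  simp only [Fin.val_mk, Nat.cast_zero] at h2
  omega

theorem gap_aux {k : ℕ} {l : Partition} (h : pet k l ≠ 0) (h0 : l.parts 0 < k)
    {g g' : ℤ} (hg : ¬ InB l g) (hg' : ¬ InB l g') (hgk : g ≤ (k:ℤ) - 2)
    (hdvd : (k:ℤ) ∣ (g - g')) (hlt : g' < g) : False := by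
  have hk1 : 1 ≤ k := by omega
  set L := length l with hL
  have hg'L : -(L:ℤ) ≤ g' := not_InB_ge l hg'
  obtain ⟨n, hn⟩ := hdvd
  have hn1 : 1 ≤ n := by
    rcases lt_or_ge n 1 with hc | hc
    · exfalso
      have : (k:ℤ) * n ≤ 0 := by
        apply mul_nonpos_of_nonneg_of_nonpos
        · exact_mod_cast Nat.zero_le k
        · omega
      omega
    · exact hc
  set s : ℕ := n.toNat with hs
  have hsn : (s:ℤ) = n := Int.toNat_of_nonneg (by omega)
  have hgs : g = g' + s * k := by rw [hsn]; linarith [hn]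
  have hg'2 : g' ≤ -2 := by nlinarith [hn, hn1, (by exact_mod_cast hk1 : (1:ℤ) ≤ (k:ℤ))]
  -- the progression predicate
  set PP : ℤ → Prop := fun c => ∃ t : ℕ, t < s ∧ c = g' + t * k with hPP
  set y : ℕ → ℤ := fun x => if PP (-(x:ℤ) - 1) then 1 else 0 with hy
  set Z : ℕ → ℤ := fun j => y j - y (j + 1) with hZ
  have hbead_le : ∀ t : ℕ, bead l t ≤ (k:ℤ) - 2 := by
    intro t
    have := bead_le l t
    omega
  -- closure claim
  have claimC : ∀ t : ℕ, PP (min (bead l t) (-1)) ↔ PP (bead l t - k) := by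
    intro t
    set b := bead l t with hb
    have hbB : InB l b := ⟨t, rfl⟩
    constructor
    · rintro ⟨t', ht's, heq⟩
      have htk : (t':ℤ) * k ≤ (s - 1) * k := by
        apply mul_le_mul_of_nonneg_right (by omega : (t':ℤ) ≤ (s:ℤ) - 1)
        exact_mod_cast Nat.zero_le k
      have hup : g' + t' * k ≤ g - k := by nlinarith [hgs]
      have hmin : min b (-1) = b := by omega
      rw [hmin] at heq
      have ht'0 : t' ≠ 0 := by
        rintro rfl
        simp at heq
        exact hg' (heq ▸ hbB)
      refine ⟨t' - 1, by omega, ?_⟩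
      have : ((t' - 1 : ℕ) : ℤ) = (t':ℤ) - 1 := by
        have : 1 ≤ t' := by omega
        push_cast [this]; ring
      rw [this, heq]; ring
    · rintro ⟨t', ht's, heq⟩
      have hbv : b = g' + (t' + 1) * k := by rw [← sub_eq_iff_eq_add'] at heq ⊢; linarith [heq]
      rcases eq_or_lt_of_le (by omega : t' + 1 ≤ s) with he | hlt2
      · exfalso
        apply hg
        have : b = g := by rw [hbv, hgs, ← he]; push_cast; ring
        exact this ▸ hbB
      · have htk : ((t':ℤ) + 1) * k ≤ (s - 1) * k := by
          apply mul_le_mul_of_nonneg_right (by omega : (t':ℤ) + 1 ≤ (s:ℤ) - 1)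
          exact_mod_cast Nat.zero_le k
        have hup : b ≤ g - k := by nlinarith [hgs, hbv]
        have hmin : min b (-1) = b := by omega
        rw [hmin]
        exact ⟨t' + 1, by omega, by push_cast [hbv]; ring⟩
  have yzero : ∀ x : ℕ, L ≤ x → y x = 0 := by
    intro x hx
    have : ¬ PP (-(x:ℤ) - 1) := by
      rintro ⟨t', ht's, heq⟩
      have : (0:ℤ) ≤ (t':ℤ) * k := by positivity
      have hxL : (L:ℤ) ≤ (x:ℤ) := by exact_mod_cast hx
      omega
    simp [hy, this]
  -- the matrix
  set A : Matrix (Fin L) (Fin L) ℤ := Matrix.of fun i j : Fin L =>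
      if (0:ℤ) ≤ (l.parts i : ℤ) - (i:ℕ) + (j:ℕ) ∧ (l.parts i : ℤ) - (i:ℕ) + (j:ℕ) < k
      then 1 else 0 with hA
  have hdet : A.det ≠ 0 := h
  set z : Fin L → ℤ := fun j => Z (j : ℕ) with hz
  have hrow : A.mulVec z = 0 := by
    funext i
    simp only [Pi.zero_apply]
    set pi := l.parts (i:ℕ) with hpi
    have hpik : pi < k := lt_of_le_of_lt (l.antitone (Nat.zero_le _)) h0
    set a : ℤ := ((i:ℕ):ℤ) - (pi:ℤ) with ha
    have hak : 0 ≤ a + k := by omega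
    set u : ℕ := a.toNat with hu
    set v : ℕ := (a + k).toNat with hv
    have hvz : ((v:ℕ):ℤ) = a + k := Int.toNat_of_nonneg hak
    have huv : u ≤ v := by
      apply Int.toNat_le_toNat; omega
    have huL : u ≤ (i:ℕ) := by
      have : a ≤ ((i:ℕ):ℤ) := by omega
      exact Int.toNat_le.mpr this
    have hiL : (i:ℕ) < L := i.isLt
    have hcond : ∀ j : ℕ, ((0:ℤ) ≤ (pi : ℤ) - (i:ℕ) + j ∧ (pi : ℤ) - (i:ℕ) + j < k)
        ↔ (u ≤ j ∧ j < v) := by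
      intro j
      rw [hu, hv]
      constructor
      · rintro ⟨h1, h2⟩
        exact ⟨Int.toNat_le.mpr (by omega), Int.lt_toNat.mpr (by omega)⟩
      · rintro ⟨h1, h2⟩
        have h1' := Int.toNat_le.mp h1
        have h2' := Int.lt_toNat.mp h2
        omega
    have hsum : A.mulVec z i = ∑ j ∈ Finset.Ico u (min v L), Z j := by
      unfold Matrix.mulVec
      show ∑ j : Fin L, A i j * z j = _
      have step1 : ∀ j : Fin L, A i j * z j =
          (fun jn => if u ≤ jn ∧ jn < v then Z jn else 0) (j:ℕ) := by
        intro j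
        rw [hA]
        simp only [Matrix.of_apply]
        rw [← hpi]
        by_cases hc : (0:ℤ) ≤ (pi : ℤ) - (i:ℕ) + (j:ℕ) ∧ (pi : ℤ) - (i:ℕ) + (j:ℕ) < k
        · rw [if_pos hc, if_pos ((hcond _).mp hc), one_mul]
        · rw [if_neg hc, if_neg (fun hh => hc ((hcond _).mpr hh)), zero_mul]
      rw [Finset.sum_congr rfl (fun j _ => step1 j)]
      rw [Fin.sum_univ_eq_sum_range (fun jn => if u ≤ jn ∧ jn < v then Z jn else 0) L]
      rw [← Finset.sum_filter]
      congr 1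
      ext j
      simp only [Finset.mem_filter, Finset.mem_range, Finset.mem_Ico, lt_min_iff]
      omega
    rw [hsum, sum_Ico_telescope (by omega : u ≤ min v L)]
    -- identify y values
    have hyu : y u = if PP (min (bead l (i:ℕ)) (-1)) then 1 else 0 := by
      have hmx : ((u:ℕ):ℤ) = max a 0 := Int.toNat_eq_max a
      have : -((u:ℕ):ℤ) - 1 = min (bead l (i:ℕ)) (-1) := by
        rw [hmx]; unfold bead; rw [← hpi, ha]; omega
      rw [hy]; simp only [this]
    have hyv : y v = if PP (bead l (i:ℕ) - k) then 1 else 0 := by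
      have : -((v:ℕ):ℤ) - 1 = bead l (i:ℕ) - k := by
        rw [hvz]; unfold bead; rw [← hpi, ha]; ring
      rw [hy]; simp only [this]
    have hminv : y (min v L) = y v := by
      rcases le_or_gt v L with hc | hc
      · rw [min_eq_left hc]
      · rw [min_eq_right (le_of_lt hc), yzero v (le_of_lt hc), yzero L le_rfl]
    rw [hminv, hyu, hyv]
    rcases (claimC (i:ℕ)) with ⟨c1, c2⟩
    by_cases hcc : PP (min (bead l (i:ℕ)) (-1))
    · rw [if_pos hcc, if_pos (c1 hcc)]; ring
    · rw [if_neg hcc, if_neg (fun hh => hcc (c2 hh))]; ring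
  -- conclude det = 0
  have hdz : A.det • z = 0 := by
    have h1 : A.adjugate.mulVec (A.mulVec z) = A.det • z := by
      rw [Matrix.mulVec_mulVec, Matrix.adjugate_mul, Matrix.smul_mulVec,
        Matrix.one_mulVec]
    rw [hrow, Matrix.mulVec_zero] at h1
    exact h1.symm
  -- the witness index
  have hgint : (0:ℤ) ≤ -g' - 1 := by omega
  set e : ℕ := (-g' - 1).toNat with he
  have hez : ((e:ℕ):ℤ) = -g' - 1 := Int.toNat_of_nonneg hgint
  have heL : e < L := by omega
  have hye : y e = 1 := by
    have : PP (-(e:ℤ) - 1) := ⟨0, by omega, by rw [hez]; push_cast; ring⟩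
    simp [hy, this]
  have hye1 : y (e + 1) = 0 := by
    have : ¬ PP (-((e:ℕ)+1:ℕ) - 1) := by
      rintro ⟨t', _, heq⟩
      have h1 : (0:ℤ) ≤ (t':ℤ) * k := by positivity
      have : -((e:ℕ):ℤ) - 2 = g' + t' * k := by push_cast at heq ⊢; linarith [heq]
      omega
    simp only [hy]
    rw [if_neg (by exact_mod_cast this)]
  have : A.det * z ⟨e, heL⟩ = 0 := congrFun hdz ⟨e, heL⟩
  rw [hz] at this
  simp only [hZ] at this
  rw [hye, hye1] at this
  simp at this
  exact hdet this

theorem charP_of_pet_ne_zero {k : ℕ} {l : Partition} (hk1 : 1 ≤ k) (h : pet k l ≠ 0) :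
    CharP k l := by
  have h0 := parts_lt_of_pet_ne_zero hk1 h
  refine ⟨h0, ?_⟩
  intro g g' hg hg' hgk hg'k hdvd
  by_contra hne
  rcases lt_or_gt_of_ne hne with hlt | hlt
  · exact gap_aux h h0 hg' hg hg'k (by rw [← neg_sub]; exact dvd_neg.mpr hdvd) hlt
  · exact gap_aux h h0 hg hg' hgk hdvd hlt

/-! ### The rim hook construction -/

noncomputable def hookP (l : Partition) (i₀ j₀ d : ℕ) : ℕ → ℕ := fun t =>
  if t < i₀ then l.parts t else if t < j₀ then l.parts (t+1) - 1
  else if t = j₀ then d else l.parts t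

section Hook

variable {l : Partition} {i₀ j₀ d : ℕ}

lemma hookP_lo (t : ℕ) (h : t < i₀) : hookP l i₀ j₀ d t = l.parts t := by
  unfold hookP; rw [if_pos h]

lemma hookP_mid (t : ℕ) (h1 : i₀ ≤ t) (h2 : t < j₀) :
    hookP l i₀ j₀ d t = l.parts (t+1) - 1 := by
  unfold hookP; rw [if_neg (by omega), if_pos h2]

lemma hookP_j (hij : i₀ ≤ j₀) : hookP l i₀ j₀ d j₀ = d := by
  unfold hookP
  rw [if_neg (by omega : ¬ j₀ < i₀), if_neg (lt_irrefl j₀), if_pos rfl]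

lemma hookP_hi (hij : i₀ ≤ j₀) (t : ℕ) (h : j₀ < t) : hookP l i₀ j₀ d t = l.parts t := by
  unfold hookP; rw [if_neg (by omega), if_neg (by omega), if_neg (by omega)]

variable (hij : i₀ ≤ j₀) (hd1 : d + 1 ≤ l.parts j₀) (hd2 : l.parts (j₀+1) ≤ d)

include hd1 in
lemma hook_parts1 (t : ℕ) (h2 : t ≤ j₀) : 1 ≤ l.parts t := by
  have := l.antitone h2; omega

include hij hd1 hd2 in
lemma hookP_mono (t : ℕ) : hookP l i₀ j₀ d (t+1) ≤ hookP l i₀ j₀ d t := by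
  rcases lt_trichotomy (t+1) i₀ with h1 | h1 | h1
  · rw [hookP_lo (t+1) h1, hookP_lo t (by omega)]
    exact l.antitone (by omega)
  · rw [hookP_lo t (by omega)]
    rcases lt_or_eq_of_le (h1 ▸ hij : t + 1 ≤ j₀) with h2 | h2
    · rw [hookP_mid (t+1) (by omega) h2]
      have := l.antitone (by omega : t ≤ t+1+1)
      omega
    · subst h2
      rw [hookP_j hij]
      have := l.antitone (by omega : t ≤ t+1)
      omega
  · rcases lt_trichotomy (t+1) j₀ with h2 | h2 | h2
    · rw [hookP_mid (t+1) (by omega) h2, hookP_mid t (by omega) (by omega)]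
      have := l.antitone (by omega : t+1 ≤ t+1+1)
      omega
    · subst h2
      rw [hookP_j hij, hookP_mid t (by omega) (by omega)]
      omega
    · rcases lt_trichotomy t j₀ with h3 | h3 | h3
      · omega
      · subst h3
        rw [hookP_hi hij (t+1) (by omega), hookP_j hij]
        exact hd2
      · rw [hookP_hi hij (t+1) (by omega), hookP_hi hij t h3]
        exact l.antitone (by omega)

include hij hd1 in
lemma hookP_le (t : ℕ) : hookP l i₀ j₀ d t ≤ l.parts t := by
  rcases lt_trichotomy t j₀ with h2 | h2 | h2
  · rcases lt_or_ge t i₀ with h1 | h1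
    · rw [hookP_lo t h1]
    · rw [hookP_mid t h1 h2]
      have := l.antitone (by omega : t ≤ t+1)
      omega
  · subst h2
    rw [hookP_j hij]
    omega
  · rw [hookP_hi hij t h2]

include hij hd1 hd2 in
/-- the partition obtained by the hook removal -/
noncomputable def hookMu : Partition where
  parts := hookP l i₀ j₀ d
  antitone := antitone_nat_of_succ_le (hookP_mono hij hd1 hd2)
  fin_supp := by
    obtain ⟨N, hN⟩ := l.fin_supp
    refine ⟨max N (j₀+1), fun i hi => ?_⟩
    rw [hookP_hi hij i (by omega)]
    exact hN i (by omega)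

lemma hookMu_parts : (hookMu hij hd1 hd2).parts = hookP l i₀ j₀ d := rfl

end Hook

theorem hook_removal {k : ℕ} (hk : 1 ≤ k) (l : Partition) (i₀ : ℕ)
    (hgap : ¬ InB l (bead l i₀ - k)) :
    ∃ mu : Partition, IsRimHook l mu k ∧ psize l = psize mu + k ∧
      mu.parts 0 ≤ l.parts 0 ∧
      (∀ c, InB mu c ↔ ((InB l c ∧ c ≠ bead l i₀) ∨ c = bead l i₀ - k)) := by
  classical
  -- find j₀
  obtain ⟨j₀, hij, hBj, hAj⟩ : ∃ j₀, i₀ ≤ j₀ ∧ bead l i₀ - k < bead l j₀ ∧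
      bead l (j₀+1) < bead l i₀ - k := by
    set Nb : ℕ := l.parts 0 + i₀ + k with hNb
    have hPbound : ∀ j, bead l i₀ - k < bead l j → j < Nb := by
      intro j hj
      have h1 : bead l j ≤ (l.parts 0 : ℤ) - j - 1 := by
        have h2 : (l.parts j : ℤ) ≤ l.parts 0 := by
          exact_mod_cast l.antitone (Nat.zero_le j)
        unfold bead; omega
      have h2 : -(i₀:ℤ) - 1 ≤ bead l i₀ := bead_ge l i₀
      have : (j:ℤ) < (l.parts 0 : ℤ) + i₀ + k := by omega
      exact_mod_cast this
    have hPi₀ : bead l i₀ - k < bead l i₀ := by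
      have : (0:ℤ) < k := by exact_mod_cast hk
      omega
    refine ⟨Nat.findGreatest (fun j => bead l i₀ - k < bead l j) Nb, ?_, ?_, ?_⟩
    · exact Nat.le_findGreatest (P := fun j => bead l i₀ - k < bead l j)
        (le_of_lt (hPbound i₀ hPi₀)) hPi₀
    · exact Nat.findGreatest_spec (P := fun j => bead l i₀ - k < bead l j)
        (le_of_lt (hPbound i₀ hPi₀)) hPi₀
    · have hspec : bead l i₀ - k <
          bead l (Nat.findGreatest (fun j => bead l i₀ - k < bead l j) Nb) :=
        Nat.findGreatest_spec (P := fun j => bead l i₀ - k < bead l j)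
          (le_of_lt (hPbound i₀ hPi₀)) hPi₀
      have hgr : ¬ (bead l i₀ - k <
          bead l (Nat.findGreatest (fun j => bead l i₀ - k < bead l j) Nb + 1)) := by
        have hle2 : Nat.findGreatest (fun j => bead l i₀ - k < bead l j) Nb + 1 ≤ Nb := by
          have := hPbound _ hspec
          omega
        exact Nat.findGreatest_is_greatest (P := fun j => bead l i₀ - k < bead l j)
          (by omega) hle2
      push_neg at hgr
      rcases lt_or_eq_of_le hgr with hlt | heq
      · exact hlt
      · exact absurd ⟨_, heq⟩ hgap
  -- the value d
  have hbge : -((j₀:ℤ) + 2) ≤ bead l (j₀+1) := by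
    have := bead_ge l (j₀+1); push_cast at this ⊢; omega
  obtain ⟨d, hdc⟩ : ∃ d : ℕ, (d:ℤ) = bead l i₀ - k + j₀ + 1 :=
    ⟨(bead l i₀ - k + j₀ + 1).toNat, Int.toNat_of_nonneg (by omega)⟩
  have hbj_eq : bead l j₀ = (l.parts j₀ : ℤ) - j₀ - 1 := rfl
  have hbj1_eq : bead l (j₀+1) = (l.parts (j₀+1) : ℤ) - (j₀+1) - 1 := by
    unfold bead; push_cast; ring
  have hd1 : d + 1 ≤ l.parts j₀ := by
    have : (d:ℤ) + 1 ≤ (l.parts j₀ : ℤ) := by omega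
    exact_mod_cast this
  have hd2 : l.parts (j₀+1) ≤ d := by
    have : ((l.parts (j₀+1)) : ℤ) ≤ (d:ℤ) := by omega
    exact_mod_cast this
  have hparts1 : ∀ t, t ≤ j₀ → 1 ≤ l.parts t := hook_parts1 hd1
  set mu : Partition := hookMu hij hd1 hd2 with hmu
  have hmup : ∀ t, mu.parts t = hookP l i₀ j₀ d t := fun t => rfl
  have hle : ∀ t, mu.parts t ≤ l.parts t := fun t => hookP_le hij hd1 t
  -- cells membership
  have hcell : ∀ a b : ℕ, ((a, b) ∈ cells l mu) ↔
      (hookP l i₀ j₀ d a ≤ b ∧ b < l.parts a) := fun a b => Iff.rfl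
  have hrow_empty : ∀ t, (t < i₀ ∨ j₀ < t) → hookP l i₀ j₀ d t = l.parts t := by
    intro t ht
    rcases ht with h | h
    · exact hookP_lo t h
    · exact hookP_hi hij t h
  have hrowbound : ∀ t c, (t, c) ∈ cells l mu → i₀ ≤ t ∧ t ≤ j₀ := by
    intro t c hc
    rw [hcell] at hc
    by_contra hcon
    push_neg at hcon
    have : hookP l i₀ j₀ d t = l.parts t := by
      rcases le_or_gt i₀ t with h1 | h1
      · exact hrow_empty t (Or.inr (hcon h1))
      · exact hrow_empty t (Or.inl h1)
    omega
  have hsymm : Symmetric (fun a b => a ∈ cells l mu ∧ b ∈ cells l mu ∧ Adj a b) := by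
    intro a b ⟨h1, h2, h3⟩
    refine ⟨h2, h1, ?_⟩
    unfold Adj at h3 ⊢
    tauto
  have hRTGsymm := fun {a b : ℕ × ℕ} (h : Relation.ReflTransGen (fun a b : ℕ × ℕ => a ∈ cells l mu ∧ b ∈ cells l mu ∧ Adj a b) a b) =>
    (@Relation.ReflTransGen.stdSymm (ℕ × ℕ) (fun a b : ℕ × ℕ => a ∈ cells l mu ∧ b ∈ cells l mu ∧ Adj a b) ⟨fun x y hxy => hsymm hxy⟩).symm a b h
  have path_row_up : ∀ n t c, (t, c) ∈ cells l mu → (t, c+n) ∈ cells l mu →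
      Relation.ReflTransGen (fun a b => a ∈ cells l mu ∧ b ∈ cells l mu ∧ Adj a b)
        (t, c) (t, c+n) := by
    intro n
    induction n with
    | zero => intro t c h1 _; exact Relation.ReflTransGen.refl
    | succ n ih =>
      intro t c h1 h2
      rw [hcell] at h1 h2
      have hmid : (t, c+n) ∈ cells l mu := by rw [hcell]; omega
      refine Relation.ReflTransGen.tail (ih t c (by rw [hcell]; omega) hmid) ?_
      refine ⟨hmid, by rw [hcell]; omega, ?_⟩
      left
      refine ⟨rfl, Or.inl rfl⟩
  have path_row : ∀ t c c', (t, c) ∈ cells l mu → (t, c') ∈ cells l mu →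
      Relation.ReflTransGen (fun a b => a ∈ cells l mu ∧ b ∈ cells l mu ∧ Adj a b)
        (t, c) (t, c') := by
    intro t c c' h1 h2
    rcases le_total c c' with hc | hc
    · have he : c' = c + (c' - c) := by omega
      rw [he] at h2 ⊢
      exact path_row_up _ t c h1 h2
    · have he : c = c' + (c - c') := by omega
      rw [he] at h1 ⊢
      exact hRTGsymm (path_row_up _ t c' h2 h1)
  have hanchor : (j₀, d) ∈ cells l mu := by
    rw [hcell, hookP_j hij]
    omega
  have desc : ∀ n t c, t + n = j₀ → (t, c) ∈ cells l mu →
      Relation.ReflTransGen (fun a b => a ∈ cells l mu ∧ b ∈ cells l mu ∧ Adj a b)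
        (t, c) (j₀, d) := by
    intro n
    induction n with
    | zero =>
      intro t c ht hc
      have : t = j₀ := by omega
      subst this
      exact path_row t c d hc hanchor
    | succ n ih =>
      intro t c ht hc
      have hti : i₀ ≤ t := (hrowbound t c hc).1
      have htj : t < j₀ := by omega
      have hp1 : 1 ≤ l.parts (t+1) := hparts1 (t+1) (by omega)
      have hp2 : l.parts (t+1) ≤ l.parts t := l.antitone (by omega)
      have hcx : (t, l.parts (t+1) - 1) ∈ cells l mu := by
        rw [hcell, hookP_mid t hti htj]
        omega
      have hcx1 : (t+1, l.parts (t+1) - 1) ∈ cells l mu := by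
        rw [hcell]
        constructor
        · rcases lt_or_eq_of_le (show t + 1 ≤ j₀ by omega) with hcase | hcase
          · rw [hookP_mid (t+1) (by omega) hcase]
            have := l.antitone (by omega : t + 1 ≤ t + 1 + 1)
            omega
          · rw [hcase, hookP_j hij]
            have hpp : l.parts (t+1) = l.parts j₀ := by rw [hcase]
            omega
        · omega
      refine Relation.ReflTransGen.trans (path_row t c (l.parts (t+1) - 1) hc hcx) ?_
      refine Relation.ReflTransGen.head ⟨hcx, hcx1, ?_⟩ (ih (t+1) _ (by omega) hcx1)
      right
      exact ⟨rfl, Or.inl rfl⟩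
  have hconn : ∀ c ∈ cells l mu, ∀ e ∈ cells l mu,
      Relation.ReflTransGen (fun a b => a ∈ cells l mu ∧ b ∈ cells l mu ∧ Adj a b) c e := by
    rintro ⟨t, c⟩ hc ⟨t', c'⟩ he
    have hb1 := hrowbound t c hc
    have hb2 := hrowbound t' c' he
    exact Relation.ReflTransGen.trans (desc (j₀ - t) t c (by omega) hc)
      (hRTGsymm (desc (j₀ - t') t' c' (by omega) he))
  -- no 2x2
  have h2x2 : ¬ ∃ i j : ℕ, (i, j) ∈ cells l mu ∧ (i+1, j) ∈ cells l mu ∧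
      (i, j+1) ∈ cells l mu ∧ (i+1, j+1) ∈ cells l mu := by
    rintro ⟨i, j, h1, h2, h3, h4⟩
    have hb1 := hrowbound i j h1
    have hb2 := hrowbound (i+1) j h2
    have hij' : i < j₀ := by omega
    rw [hcell] at h1 h4
    rw [hookP_mid i (by omega) hij'] at h1
    have hp1 : 1 ≤ l.parts (i+1) := hparts1 (i+1) (by omega)
    omega
  -- the sum
  have hsumf : (∑ᶠ t, (l.parts t - mu.parts t)) = k := by
    have hfsupp : Function.support (fun t => l.parts t - mu.parts t) ⊆
        (Finset.Icc i₀ j₀ : Finset ℕ) := by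
      intro t ht
      simp only [Function.mem_support] at ht
      simp only [Finset.coe_Icc, Set.mem_Icc]
      by_contra hcon
      push_neg at hcon
      have heq : hookP l i₀ j₀ d t = l.parts t := by
        rcases le_or_gt i₀ t with h1 | h1
        · exact hrow_empty t (Or.inr (hcon h1))
        · exact hrow_empty t (Or.inl h1)
      rw [hmup t] at ht
      omega
    rw [finsum_eq_finset_sum_of_support_subset _ hfsupp]
    have hgoal : ((∑ t ∈ Finset.Icc i₀ j₀, (l.parts t - mu.parts t) : ℕ) : ℤ) = (k:ℤ) := by
      rw [Nat.cast_sum, ← Finset.Ico_add_one_right_eq_Icc, Finset.sum_Ico_succ_top hij]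
      have hterm : ∀ t ∈ Finset.Ico i₀ j₀, ((l.parts t - mu.parts t : ℕ) : ℤ) =
          ((l.parts t : ℤ) - (t:ℕ)) - ((l.parts (t+1) : ℤ) - ((t+1 : ℕ) : ℤ)) := by
        intro t ht
        simp only [Finset.mem_Ico] at ht
        have hp1 : 1 ≤ l.parts (t+1) := hparts1 (t+1) (by omega)
        have hp2 : l.parts (t+1) ≤ l.parts t := l.antitone (by omega)
        rw [hmup t, hookP_mid t ht.1 ht.2]
        omega
      rw [Finset.sum_congr rfl hterm, sum_Ico_telescope (y := fun t => (l.parts t : ℤ) - t) hij]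
      have hj : ((l.parts j₀ - mu.parts j₀ : ℕ) : ℤ) = (l.parts j₀ : ℤ) - d := by
        rw [hmup j₀, hookP_j hij]
        omega
      rw [hj]
      have hbi : bead l i₀ = (l.parts i₀ : ℤ) - i₀ - 1 := rfl
      push_cast
      omega
    exact_mod_cast hgoal
  -- psize
  have hpsize : psize l = psize mu + k := by
    obtain ⟨N, hN⟩ := mu.fin_supp
    have hsupf : (Function.support (fun t => l.parts t - mu.parts t)).Finite := by
      apply Set.Finite.subset (Finset.Icc i₀ j₀ : Finset ℕ).finite_toSet
      intro t ht
      simp only [Function.mem_support] at ht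
      simp only [Finset.coe_Icc, Set.mem_Icc]
      by_contra hcon
      push_neg at hcon
      have heq : hookP l i₀ j₀ d t = l.parts t := by
        rcases le_or_gt i₀ t with h1 | h1
        · exact hrow_empty t (Or.inr (hcon h1))
        · exact hrow_empty t (Or.inl h1)
      rw [hmup t] at ht
      omega
    have hsupμ : (Function.support mu.parts).Finite := by
      apply Set.Finite.subset (Set.finite_Iio N)
      intro t ht
      simp only [Function.mem_support] at ht
      simp only [Set.mem_Iio]
      by_contra hcon
      exact ht (hN t (by omega))
    have hpoint : ∀ t, l.parts t = mu.parts t + (l.parts t - mu.parts t) := by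
      intro t
      have := hle t
      omega
    calc psize l = ∑ᶠ t, (mu.parts t + (l.parts t - mu.parts t)) := finsum_congr hpoint
      _ = (∑ᶠ t, mu.parts t) + ∑ᶠ t, (l.parts t - mu.parts t) :=
          finsum_add_distrib hsupμ hsupf
      _ = psize mu + k := by rw [hsumf]; rfl
  -- beads
  have hbead_mu : ∀ t, bead mu t =
      if t < i₀ then bead l t else if t < j₀ then bead l (t+1)
      else if t = j₀ then bead l i₀ - k else bead l t := by
    intro t
    show (mu.parts t : ℤ) - t - 1 = _
    rw [hmup t]
    split_ifs with h1 h2 h3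
    · rw [hookP_lo t h1]; rfl
    · rw [hookP_mid t (by omega) h2]
      have hp1 : 1 ≤ l.parts (t+1) := hparts1 (t+1) (by omega)
      have : bead l (t+1) = (l.parts (t+1) : ℤ) - (t+1) - 1 := by
        unfold bead; push_cast; ring
      omega
    · subst h3
      rw [hookP_j hij]
      omega
    · rw [hookP_hi hij t (by omega)]; rfl
  have hbinj := (bead_strictAnti l).injective
  have hInB : ∀ c, InB mu c ↔ ((InB l c ∧ c ≠ bead l i₀) ∨ c = bead l i₀ - k) := by
    intro c
    constructor
    · rintro ⟨t, ht⟩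
      rw [hbead_mu t] at ht
      split_ifs at ht with h1 h2 h3
      · left
        refine ⟨⟨t, ht⟩, fun hc => ?_⟩
        have : t = i₀ := hbinj (by rw [ht, hc])
        omega
      · left
        refine ⟨⟨t+1, ht⟩, fun hc => ?_⟩
        have : t + 1 = i₀ := hbinj (by rw [ht, hc])
        omega
      · right; exact ht.symm
      · left
        refine ⟨⟨t, ht⟩, fun hc => ?_⟩
        have : t = i₀ := hbinj (by rw [ht, hc])
        omega
    · rintro (⟨⟨t, ht⟩, hne⟩ | hc)
      · have hti : t ≠ i₀ := by
          rintro rfl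
          exact hne (by rw [← ht])
        rcases lt_or_gt_of_ne hti with h1 | h1
        · exact ⟨t, by rw [hbead_mu t, if_pos h1]; exact ht⟩
        · rcases le_or_gt t j₀ with h2 | h2
          · refine ⟨t - 1, ?_⟩
            rw [hbead_mu (t-1), if_neg (by omega), if_pos (by omega)]
            have he : t - 1 + 1 = t := by omega
            rw [he]
            exact ht
          · refine ⟨t, ?_⟩
            rw [hbead_mu t, if_neg (by omega), if_neg (by omega), if_neg (by omega)]
            exact ht
      · refine ⟨j₀, ?_⟩
        rw [hbead_mu j₀, if_neg (by omega), if_neg (by omega), if_pos rfl]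
        exact hc.symm
  exact ⟨mu, ⟨hle, hsumf, hconn, h2x2⟩, hpsize, hle 0, hInB⟩

theorem charP_hook {k : ℕ} {l mu : Partition} {i₀ : ℕ} (hchar : CharP k l)
    (hgap : ¬ InB l (bead l i₀ - k)) (hp0 : mu.parts 0 ≤ l.parts 0)
    (hInB : ∀ c, InB mu c ↔ ((InB l c ∧ c ≠ bead l i₀) ∨ c = bead l i₀ - k)) :
    CharP k mu := by
  obtain ⟨h0, hgaps⟩ := hchar
  refine ⟨by omega, ?_⟩
  intro g g' hg hg' hk2 hk2' hdvd
  have hbi : bead l i₀ ≤ (k:ℤ) - 2 := by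
    have := bead_le l i₀; omega
  have hgl : ∀ c : ℤ, ¬ InB mu c → c ≠ bead l i₀ → ¬ InB l c := by
    intro c hc hne hcl
    exact hc ((hInB c).mpr (Or.inl ⟨hcl, hne⟩))
  have hmuB : InB mu (bead l i₀ - k) := (hInB _).mpr (Or.inr rfl)
  by_cases hgi : g = bead l i₀ <;> by_cases hgi' : g' = bead l i₀
  · rw [hgi, hgi']
  · exfalso
    have hgl' : ¬ InB l g' := hgl g' hg' hgi'
    have := hgaps (bead l i₀ - k) g' hgap hgl' (by omega) hk2'
      (by rw [← hgi] at hbi ⊢; obtain ⟨e, he⟩ := hdvd; exact ⟨e - 1, by rw [hgi] at he ⊢; linarith⟩)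
    exact hg' (this ▸ hmuB)
  · exfalso
    have hgl'' : ¬ InB l g := hgl g hg hgi
    have := hgaps (bead l i₀ - k) g hgap hgl'' (by omega) hk2
      (by obtain ⟨e, he⟩ := hdvd; exact ⟨-e - 1, by rw [hgi'] at he; linarith⟩)
    exact hg (this ▸ hmuB)
  · exact hgaps g g' (hgl g hg hgi) (hgl g' hg' hgi') hk2 hk2' hdvd

theorem core_single_row {k : ℕ} (hk : 1 ≤ k) {l : Partition} (hchar : CharP k l)
    (hcore : ∀ i, InB l (bead l i - k)) : ∀ t, 1 ≤ t → l.parts t = 0 := by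
  obtain ⟨h0, hgaps⟩ := hchar
  have hall : ∀ c : ℤ, c ≤ -2 → InB l c := by
    intro c hc
    by_contra hcB
    rcases Classical.em (InB l (c + k)) with h | h
    · obtain ⟨i, hi⟩ := h
      have h2 := hcore i
      rw [hi] at h2
      have h3 : c + (k:ℤ) - k = c := by ring
      rw [h3] at h2
      exact hcB h2
    · have hkc : c + (k:ℤ) ≤ (k:ℤ) - 2 := by omega
      have := hgaps (c + k) c h hcB hkc (by omega) ⟨1, by ring⟩
      omega
  obtain ⟨t₀, ht₀⟩ := hall (-2) (by omega)
  have hstep : ∀ n : ℕ, bead l (t₀ + n) = -2 - n := by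
    intro n
    induction n with
    | zero => simpa using ht₀
    | succ n ih =>
      obtain ⟨s, hs⟩ := hall (-3 - n) (by omega)
      have hslt : t₀ + n < s := by
        by_contra hcon
        push_neg at hcon
        have h4 := (bead_strictAnti l).antitone hcon
        rw [hs, ih] at h4
        omega
      have h1 : bead l (t₀ + n + 1) < bead l (t₀ + n) := bead_strictAnti l (by omega)
      have h2 : bead l s ≤ bead l (t₀ + n + 1) :=
        (bead_strictAnti l).antitone (by omega : t₀ + n + 1 ≤ s)
      show bead l (t₀ + n + 1) = -2 - ((n:ℤ) + 1)
      push_cast at h1 h2 ih hs ⊢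
      omega
  have hconst : ∀ n : ℕ, (l.parts (t₀ + n) : ℤ) = (t₀ : ℤ) - 1 := by
    intro n
    have h5 := hstep n
    unfold bead at h5
    push_cast at h5 ⊢
    omega
  obtain ⟨N, hN⟩ := l.fin_supp
  have ht₀1 : t₀ = 1 := by
    have h1 := hconst N
    have h2 : l.parts (t₀ + N) = 0 := hN _ (by omega)
    rw [h2] at h1
    push_cast at h1
    omega
  intro t ht
  have h3 := hconst (t - 1)
  rw [ht₀1] at h3
  have h4 : 1 + (t - 1) = t := by omega
  rw [h4] at h3
  omega

theorem ofList_single_parts (m t : ℕ) : (ofList [m]).parts t = if t = 0 then m else 0 := by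
  show ([m].drop t).foldr max 0 = _
  cases t with
  | zero => simp
  | succ n => simp

theorem no_hook_small {k d : ℕ} (hd : d < k) (b : Partition) :
    ¬ IsRimHook (ofList [d]) b k := by
  rintro ⟨hle, hsum, -, -⟩
  have h1 : ∀ t : ℕ, t ≠ 0 → (ofList [d]).parts t - b.parts t = 0 := by
    intro t ht
    have h2 : (ofList [d]).parts t = 0 := by rw [ofList_single_parts]; simp [ht]
    omega
  rw [finsum_eq_single _ 0 h1] at hsum
  have h3 := hle 0
  have h2 : (ofList [d]).parts 0 = d := by rw [ofList_single_parts]; simp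
  omega

theorem chain {k : ℕ} (hk : 1 ≤ k) : ∀ m : ℕ, ∀ l : Partition, CharP k l → psize l = m →
    Relation.ReflTransGen (fun a b => IsRimHook a b k) l (ofList [m % k]) := by
  intro m
  induction m using Nat.strong_induction_on with
  | _ m ih =>
  intro l hchar hsize
  rcases lt_or_ge m k with hmk | hmk
  · have hcore : ∀ i, InB l (bead l i - k) := by
      by_contra hcon
      push_neg at hcon
      obtain ⟨i, hi⟩ := hcon
      obtain ⟨mu, hrh, hps, -, -⟩ := hook_removal hk l i hi
      omega
    have hz := core_single_row hk hchar hcore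
    have hm : l.parts 0 = m := by rw [← hsize, psize_eq_parts_zero l hz]
    have hleq : l = ofList [m % k] := by
      apply Partition.ext'
      funext t
      rw [ofList_single_parts]
      rcases Nat.eq_zero_or_pos t with rfl | ht
      · simp [hm, Nat.mod_eq_of_lt hmk]
      · rw [if_neg (by omega : ¬ t = 0)]
        exact hz t (by omega)
    rw [← hleq]
  · have hncore : ∃ i, ¬ InB l (bead l i - k) := by
      by_contra hcon
      push_neg at hcon
      have hz := core_single_row hk hchar hcon
      have hm : l.parts 0 = m := by rw [← hsize, psize_eq_parts_zero l hz]
      have := hchar.1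
      omega
    obtain ⟨i, hi⟩ := hncore
    obtain ⟨mu, hrh, hps, hp0, hInB⟩ := hook_removal hk l i hi
    have hchar' : CharP k mu := charP_hook hchar hi hp0 hInB
    have hsz : psize mu = m - k := by omega
    have hmod : (m - k) % k = m % k := by
      conv_rhs => rw [show m = (m - k) + k by omega]
      rw [Nat.add_mod_right]
    have htail := ih (m - k) (by omega) mu hchar' hsz
    rw [hmod] at htail
    exact Relation.ReflTransGen.head hrh htail

/-- if `λ ⊢ m` and `pet_k(λ) ≠ 0`, then `λ_1 < k` and the
`k`-core of `λ` is the one-part partition `(m mod k)` (the empty partition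
when `m mod k = 0`). -/
theorem core_of_nonzero_pet (k m : ℕ) (hk : 1 ≤ k) (l : Partition)
    (hm : psize l = m) (h : pet k l ≠ 0) :
    l.parts 0 < k ∧ IsCore k l (ofList [m % k]) := by
  have h0 : l.parts 0 < k := parts_lt_of_pet_ne_zero hk h
  have hchar : CharP k l := charP_of_pet_ne_zero hk h
  exact ⟨h0, chain hk m l hchar hm, fun b => no_hook_small (Nat.mod_lt m (by omega)) b⟩

end Petrie
end
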